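/- Dual solution from primal: if g : ℝⁿ → ℝ is smooth (differentiable) and strongly convex, and x⋆ minimizes g(x) + max_{w ∈ 𝒱} ⟨w, x⟩ over ℝⁿ for a nonempty finite set 𝒱, then w⋆ = −∇g(x⋆) lies in conv(𝒱) and maximizes −g*(−w) over conv(𝒱). -/

import Mathlib

open scoped RealInnerProductSpace

/-- The Fenchel conjugate (real-valued; finite when `g` is strongly convex). -/
noncomputable def fenchel {n : ℕ} (g : EuclideanSpace ℝ (Fin n) → ℝ)
    (w : EuclideanSpace ℝ (Fin n)) : ℝ :=
  ⨆ x, (⟪w, x⟫ - g x)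

section Helpers

open Filter Set

variable {E : Type*} [NormedAddCommGroup E] [InnerProductSpace ℝ E] [CompleteSpace E]

lemma line_hasDerivAt (g : E → ℝ) {x gx : E} (d : E) (hg : HasGradientAt g gx x) :
    HasDerivAt (fun t : ℝ => g (x + t • d)) ⟪gx, d⟫ 0 := by
  have h1 : HasDerivAt (fun t : ℝ => x + t • d) d 0 := by
    simpa using ((hasDerivAt_id (0 : ℝ)).smul_const d).const_add x
  have h2 := hg.hasFDerivAt
  have h2' : HasFDerivAt g (InnerProductSpace.toDual ℝ E gx) ((fun t : ℝ => x + t • d) 0) := by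
    simpa using h2
  have h3 := h2'.comp_hasDerivAt (0 : ℝ) h1
  simp only [InnerProductSpace.toDual_apply_apply] at h3
  exact h3

lemma grad_ge (g : E → ℝ) {x gx : E} (d : E) (hg : HasGradientAt g gx x) (c : ℝ)
    (h : ∀ t : ℝ, t ∈ Set.Ioo (0 : ℝ) 1 → c * t ≤ g (x + t • d) - g x) :
    c ≤ ⟪gx, d⟫ := by
  have hd := line_hasDerivAt g d hg
  rw [hasDerivAt_iff_tendsto_slope] at hd
  have hd' : Tendsto (slope (fun t : ℝ => g (x + t • d)) 0)
      (nhdsWithin 0 (Set.Ioi 0)) (nhds ⟪gx, d⟫) :=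
    hd.mono_left (nhdsWithin_mono _ (fun t ht => ne_of_gt ht))
  refine ge_of_tendsto hd' ?_
  filter_upwards [Ioo_mem_nhdsGT_of_mem (by norm_num : (0 : ℝ) ∈ Set.Ico (0 : ℝ) 1)] with t ht
  have ht0 : 0 < t := ht.1
  have key := h t ht
  rw [slope_def_field]
  simp only [zero_smul, add_zero, sub_zero]
  rw [le_div_iff₀ ht0]
  linarith

lemma grad_le (g : E → ℝ) {x gx : E} (d : E) (hg : HasGradientAt g gx x) (c : ℝ)
    (h : ∀ t : ℝ, t ∈ Set.Ioo (0 : ℝ) 1 → g (x + t • d) - g x ≤ c * t) :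
    ⟪gx, d⟫ ≤ c := by
  have hd := line_hasDerivAt g d hg
  rw [hasDerivAt_iff_tendsto_slope] at hd
  have hd' : Tendsto (slope (fun t : ℝ => g (x + t • d)) 0)
      (nhdsWithin 0 (Set.Ioi 0)) (nhds ⟪gx, d⟫) :=
    hd.mono_left (nhdsWithin_mono _ (fun t ht => ne_of_gt ht))
  refine le_of_tendsto hd' ?_
  filter_upwards [Ioo_mem_nhdsGT_of_mem (by norm_num : (0 : ℝ) ∈ Set.Ico (0 : ℝ) 1)] with t ht
  have ht0 : 0 < t := ht.1
  have key := h t ht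
  rw [slope_def_field]
  simp only [zero_smul, add_zero, sub_zero]
  rw [div_le_iff₀ ht0]
  linarith

/-- Gradient inequality for a differentiable convex function. -/
lemma convex_grad_ineq (g : E → ℝ) {x gx : E} (hconv : ConvexOn ℝ Set.univ g)
    (hg : HasGradientAt g gx x) (y : E) : ⟪gx, y - x⟫ ≤ g y - g x := by
  refine grad_le g (y - x) hg _ (fun t ht => ?_)
  have h1 : x + t • (y - x) = (1 - t) • x + t • y := by
    rw [smul_sub, sub_smul, one_smul]; abel
  have h2 := hconv.2 (Set.mem_univ x) (Set.mem_univ y) (by linarith [ht.1, ht.2] : 0 ≤ 1 - t)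
    (le_of_lt ht.1) (by ring : (1 - t) + t = 1)
  rw [h1]
  simp only [smul_eq_mul] at h2
  calc g ((1 - t) • x + t • y) - g x ≤ (1 - t) * g x + t * g y - g x := by linarith
    _ = (g y - g x) * t := by ring

/-- Gradient of `fun z => α/2 * ‖z‖^2`. -/
lemma normSq_hasGradientAt (α : ℝ) (x : E) :
    HasGradientAt (fun z : E => α / 2 * ‖z‖ ^ 2) (α • x) x := by
  rw [hasGradientAt_iff_hasFDerivAt]
  have h1 : HasFDerivAt (fun z : E => (⟪z, z⟫ : ℝ))
      ((fderivInnerCLM ℝ (x, x)).comp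
        ((ContinuousLinearMap.id ℝ E).prod (ContinuousLinearMap.id ℝ E))) x :=
    (hasFDerivAt_id x).inner ℝ (hasFDerivAt_id x)
  have h2 : HasFDerivAt (fun z : E => α / 2 * (⟪z, z⟫ : ℝ))
      ((α / 2) • ((fderivInnerCLM ℝ (x, x)).comp
        ((ContinuousLinearMap.id ℝ E).prod (ContinuousLinearMap.id ℝ E)))) x :=
    h1.const_mul (α / 2)
  have heq : (fun z : E => α / 2 * (⟪z, z⟫ : ℝ)) = fun z : E => α / 2 * ‖z‖ ^ 2 := by
    funext z; rw [real_inner_self_eq_norm_sq]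
  rw [heq] at h2
  convert h2 using 1
  · rfl
  · rfl
  apply ContinuousLinearMap.ext
  intro z
  simp [fderivInnerCLM_apply, InnerProductSpace.toDual_apply_apply, real_inner_smul_left,
    real_inner_comm x z]
  ring

end Helpers

/-- Dual solution from primal: if `g : ℝⁿ → ℝ` is differentiable and strongly convex and
`x⋆` minimizes `g x + max_{w ∈ 𝒱} ⟪w, x⟫`, then `w⋆ = -∇g(x⋆)` lies in `conv 𝒱` and
maximizes `-g*(-w)` over `conv 𝒱`. -/
theorem stmt8 {n : ℕ} (g : EuclideanSpace ℝ (Fin n) → ℝ)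
    (hlsc : LowerSemicontinuous g)
    (hsc : ∃ α > (0 : ℝ), ConvexOn ℝ Set.univ (fun x => g x - α / 2 * ‖x‖ ^ 2))
    (V : Finset (EuclideanSpace ℝ (Fin n))) (hV : V.Nonempty)
    (xstar gx : EuclideanSpace ℝ (Fin n))
    (hgrad : HasGradientAt g gx xstar)
    (hmin : ∀ y, g xstar + V.sup' hV (fun w => ⟪w, xstar⟫) ≤
        g y + V.sup' hV (fun w => ⟪w, y⟫)) :
    -gx ∈ convexHull ℝ (V : Set (EuclideanSpace ℝ (Fin n))) ∧
    ∀ w ∈ convexHull ℝ (V : Set (EuclideanSpace ℝ (Fin n))),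
      -(fenchel g (-w)) ≤ -(fenchel g gx) := by
  classical
  obtain ⟨α, hα, hconv⟩ := hsc
  -- gradient of the convex part
  have hgt : HasGradientAt (fun x => g x - α / 2 * ‖x‖ ^ 2) (gx - α • xstar) xstar := by
    rw [hasGradientAt_iff_hasFDerivAt] at hgrad ⊢
    have hq := (normSq_hasGradientAt α xstar).hasFDerivAt
    have := hgrad.sub hq
    convert this using 1
    · rfl
    · rfl
    · rfl
    rw [map_sub]
  -- strong convexity gradient inequality
  have hsg : ∀ y : EuclideanSpace ℝ (Fin n), g xstar + ⟪gx, y - xstar⟫ + α / 2 * ‖y - xstar‖ ^ 2 ≤ g y := by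
    intro y
    have h1 := convex_grad_ineq _ hconv hgt y
    rw [inner_sub_left, real_inner_smul_left] at h1
    have h2 : ‖y - xstar‖ ^ 2 = ‖y‖ ^ 2 - 2 * ⟪xstar, y - xstar⟫ - ‖xstar‖ ^ 2 := by
      rw [inner_sub_right, real_inner_self_eq_norm_sq, @norm_sub_sq_real, real_inner_comm]
      ring
    have h3 := h1
    nlinarith [h1, h2]
  -- Lemma A: support function bound
  have hA : ∀ d : EuclideanSpace ℝ (Fin n), ⟪-gx, d⟫ ≤ V.sup' hV (fun w => ⟪w, d⟫) := by
    intro d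
    set M := V.sup' hV (fun w => ⟪w, d⟫) with hM
    have := grad_ge g d hgrad (-M) (fun t ht => ?_)
    · rw [inner_neg_left]; linarith
    · have hmin' := hmin (xstar + t • d)
      have hsup : V.sup' hV (fun w => ⟪w, xstar + t • d⟫) ≤
          V.sup' hV (fun w => ⟪w, xstar⟫) + t * M := by
        refine Finset.sup'_le _ _ (fun w hw => ?_)
        rw [inner_add_right, real_inner_smul_right]
        have h1 : ⟪w, xstar⟫ ≤ V.sup' hV (fun w => ⟪w, xstar⟫) :=
          Finset.le_sup' (fun w => (⟪w, xstar⟫ : ℝ)) hw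
        have h2 : ⟪w, d⟫ ≤ M := Finset.le_sup' (fun w => (⟪w, d⟫ : ℝ)) hw
        nlinarith [ht.1]
      linarith
  -- Lemma B: the value at xstar
  have hB : V.sup' hV (fun w => ⟪w, xstar⟫) ≤ ⟪-gx, xstar⟫ := by
    set M0 := V.sup' hV (fun w => ⟪w, xstar⟫) with hM0
    have := grad_ge g (-xstar) hgrad M0 (fun t ht => ?_)
    · simp only [inner_neg_left, inner_neg_right] at this ⊢; linarith
    · have hptw : xstar + t • (-xstar) = (1 - t) • xstar := by
        rw [sub_smul, one_smul, smul_neg]; abel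
      have hmin' := hmin (xstar + t • (-xstar))
      have hsup : V.sup' hV (fun w => ⟪w, xstar + t • (-xstar)⟫) ≤ (1 - t) * M0 := by
        refine Finset.sup'_le _ _ (fun w hw => ?_)
        rw [hptw, real_inner_smul_right]
        exact mul_le_mul_of_nonneg_left (Finset.le_sup' (fun w => (⟪w, xstar⟫ : ℝ)) hw)
          (by linarith [ht.2])
      nlinarith
  -- membership
  have hmem : -gx ∈ convexHull ℝ (V : Set (EuclideanSpace ℝ (Fin n))) := by
    by_contra hmem
    obtain ⟨f, u, hfu, huf⟩ := geometric_hahn_banach_closed_point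
      (convex_convexHull ℝ (V : Set (EuclideanSpace ℝ (Fin n)))) ((V : Set (EuclideanSpace ℝ (Fin n))).toFinite.isClosed_convexHull ℝ) hmem
    set d := (InnerProductSpace.toDual ℝ (EuclideanSpace ℝ (Fin n))).symm f with hd
    have hfd : ∀ z : EuclideanSpace ℝ (Fin n), f z = ⟪d, z⟫ := by
      intro z
      rw [hd, InnerProductSpace.toDual_symm_apply]
    obtain ⟨w0, hw0, hsup⟩ := V.exists_mem_eq_sup' hV (fun w => ⟪w, d⟫)
    have h1 : ⟪-gx, d⟫ ≤ ⟪w0, d⟫ := by rw [← hsup]; exact hA d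
    have h2 : f w0 < u := hfu w0 (subset_convexHull ℝ _ hw0)
    have h3 : u < f (-gx) := huf
    rw [hfd] at h2 h3
    have h4 : (⟪d, w0⟫ : ℝ) = ⟪w0, d⟫ := real_inner_comm _ _
    have h5 : (⟪d, -gx⟫ : ℝ) = ⟪-gx, d⟫ := real_inner_comm _ _
    linarith
  refine ⟨hmem, fun w hw => ?_⟩
  -- ⟪w, xstar⟫ ≤ M0
  have hwx : ⟪w, xstar⟫ ≤ V.sup' hV (fun v => ⟪v, xstar⟫) := by
    have hlin : IsLinearMap ℝ (fun z : EuclideanSpace ℝ (Fin n) => (⟪z, xstar⟫ : ℝ)) :=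
      ⟨fun a b => inner_add_left a b xstar, fun c a => real_inner_smul_left a xstar c⟩
    have hsub : (V : Set (EuclideanSpace ℝ (Fin n))) ⊆ {z : EuclideanSpace ℝ (Fin n) | ⟪z, xstar⟫ ≤ V.sup' hV (fun v => ⟪v, xstar⟫)} :=
      fun z hz => Finset.le_sup' (fun v => (⟪v, xstar⟫ : ℝ)) hz
    exact convexHull_min hsub (convex_halfSpace_le hlin _) hw
  -- value of fenchel g gx
  have hgx_val : fenchel g gx = ⟪gx, xstar⟫ - g xstar := by
    have hgr : IsGreatest (Set.range fun x => (⟪gx, x⟫ : ℝ) - g x) (⟪gx, xstar⟫ - g xstar) := by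
      constructor
      · exact ⟨xstar, rfl⟩
      · rintro _ ⟨y, rfl⟩
        have := hsg y
        rw [inner_sub_right] at this
        show (⟪gx, y⟫ : ℝ) - g y ≤ ⟪gx, xstar⟫ - g xstar
        nlinarith [sq_nonneg ‖y - xstar‖, hα.le]
    rw [fenchel, iSup]
    exact hgr.csSup_eq
  -- lower bound on fenchel g (-w)
  have hbdd : BddAbove (Set.range fun x => (⟪-w, x⟫ : ℝ) - g x) := by
    refine ⟨(⟪-w, xstar⟫ - g xstar) + ‖w + gx‖ ^ 2 / (2 * α), ?_⟩
    rintro _ ⟨y, rfl⟩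
    show (⟪-w, y⟫ : ℝ) - g y ≤ (⟪-w, xstar⟫ - g xstar) + ‖w + gx‖ ^ 2 / (2 * α)
    have h1 := hsg y
    have h2 : (⟪-w, y⟫ : ℝ) = ⟪-w, xstar⟫ + ⟪-w, y - xstar⟫ := by
      rw [← inner_add_right]; congr 1; abel
    have h3 : (⟪-w, y - xstar⟫ : ℝ) - ⟪gx, y - xstar⟫ = ⟪-(w + gx), y - xstar⟫ := by
      rw [← inner_sub_left]; congr 1; abel
    have h4 : (⟪-(w + gx), y - xstar⟫ : ℝ) ≤ ‖w + gx‖ * ‖y - xstar‖ := by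
      calc (⟪-(w + gx), y - xstar⟫ : ℝ) ≤ ‖-(w + gx)‖ * ‖y - xstar‖ := real_inner_le_norm _ _
        _ = ‖w + gx‖ * ‖y - xstar‖ := by rw [norm_neg]
    have h5 : ‖w + gx‖ * ‖y - xstar‖ - α / 2 * ‖y - xstar‖ ^ 2 ≤ ‖w + gx‖ ^ 2 / (2 * α) := by
      rw [le_div_iff₀ (by positivity : (0 : ℝ) < 2 * α)]
      nlinarith [sq_nonneg (α * ‖y - xstar‖ - ‖w + gx‖)]
    nlinarith [h1, h2, h3, h4, h5]
  have hlow : ⟪-w, xstar⟫ - g xstar ≤ fenchel g (-w) := le_ciSup hbdd xstar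
  -- combine
  have hkey : (⟪gx, xstar⟫ : ℝ) ≤ ⟪-w, xstar⟫ := by
    have h1 : (⟪-gx, xstar⟫ : ℝ) = -⟪gx, xstar⟫ := inner_neg_left _ _
    have h2 : (⟪-w, xstar⟫ : ℝ) = -⟪w, xstar⟫ := inner_neg_left _ _
    linarith [hB, hwx]
  have : fenchel g gx ≤ fenchel g (-w) := by
    rw [hgx_val]; linarith
  linarith
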